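/- Let b⁺, b⁻ ∈ ℂ with b⁺ + b⁻ = 1, and let A : ℤ × ℤ → ℂ satisfy (i) A(k + i, j) = A(i, k + j) for all i, j, k ∈ ℤ, and (ii) (k − i − j)·A(i, j) = (−i + k·b⁻)·A(i + k, j) + (−j + k·b⁺)·A(i, k + j) for all i, j, k ∈ ℤ. Then A is constant, i.e. there exists d ∈ ℂ with A(i, j) = d for all i, j ∈ ℤ. -/
import Mathlib


theorem stmt_1 (bp bm : ℂ) (hb : bp + bm = 1) (A : ℤ → ℤ → ℂ)
    (h1 : ∀ i j k : ℤ, A (k + i) j = A i (k + j))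
    (h2 : ∀ i j k : ℤ, ((k : ℂ) - (i : ℂ) - (j : ℂ)) * A i j
      = (-(i : ℂ) + (k : ℂ) * bm) * A (i + k) j + (-(j : ℂ) + (k : ℂ) * bp) * A i (k + j)) :
    ∃ d : ℂ, ∀ i j : ℤ, A i j = d := by
  have hA : ∀ i j : ℤ, A i j = A 0 (i + j) := by
    intro i j
    have := h1 0 j i
    simpa using this
  have key : ∀ n : ℤ, A 0 n = A 0 0 := by
    intro n
    rcases eq_or_ne n 0 with h | h
    · rw [h]
    · have h2' := h2 0 n (-n)
      rw [hA (0 + -n) n] at h2'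
      have e1 : (0 + -n) + n = 0 := by ring
      have e2 : (-n) + n = 0 := by ring
      rw [e1, e2] at h2'
      push_cast at h2'
      have hn : (n : ℂ) ≠ 0 := Int.cast_ne_zero.mpr h
      have : (-(n:ℂ) - n) * A 0 n = (-(n:ℂ) - n) * A 0 0 := by
        linear_combination h2' - (n : ℂ) * A 0 0 * hb
      exact mul_left_cancel₀ (by intro hc; apply hn; linear_combination -hc/2) this
  exact ⟨A 0 0, fun i j => by rw [hA i j, key]⟩
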